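/- (Claim from Theorem 'RCP is FPT parameterized by (p, min{s,d})'.) Let UR ⊆ U × R, P ⊆ R, and for C ⊆ P let U_C = {u ∈ U : N(u) = C}. Suppose S ⊆ U is a minimal blocker set for res(P,0,d,t), i.e., S intersects the union of every set of teams, but no proper subset of S has this property. Then for every C ⊆ P, if U_C ∩ S ≠ ∅ then |U_C ∖ S| < d. -/

import Mathlib

/-- Neighborhood of a set of users under an authorization policy. -/
def nbhd {U R : Type*} [DecidableEq U] [DecidableEq R]
    (UR : Finset (U × R)) (V : Finset U) : Finset R :=
  (UR.filter (fun p => p.1 ∈ V)).image Prod.snd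

/-- `S` is a blocker set: it intersects the union of every set of teams. -/
def isBlocker {U R : Type*} [Fintype U] [DecidableEq U] [DecidableEq R]
    (UR : Finset (U × R)) (P : Finset R) (d t : ℕ) (S : Finset U) : Prop :=
  ∀ V : Fin d → Finset U,
    (∀ i j, i ≠ j → Disjoint (V i) (V j)) →
    (∀ i, (V i).card ≤ t) →
    (∀ i, P ⊆ nbhd UR (V i)) →
    ((Finset.univ.biUnion V) ∩ S).Nonempty

lemma mem_nbhd {U R : Type*} [DecidableEq U] [DecidableEq R]
    {UR : Finset (U × R)} {V : Finset U} {r : R} :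
    r ∈ nbhd UR V ↔ ∃ u ∈ V, (u, r) ∈ UR := by
  simp only [nbhd, Finset.mem_image, Finset.mem_filter, Prod.exists]
  constructor
  · rintro ⟨a, b, ⟨h1, h2⟩, rfl⟩; exact ⟨a, h2, h1⟩
  · rintro ⟨a, h2, h1⟩; exact ⟨a, r, ⟨h1, h2⟩, rfl⟩

lemma nbhd_mono {U R : Type*} [DecidableEq U] [DecidableEq R]
    {UR : Finset (U × R)} {V W : Finset U} (h : V ⊆ W) :
    nbhd UR V ⊆ nbhd UR W := by
  intro r hr; rw [mem_nbhd] at *; obtain ⟨u, hu, h2⟩ := hr; exact ⟨u, h hu, h2⟩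

lemma nbhd_erase {U R : Type*} [DecidableEq U] [DecidableEq R]
    {UR : Finset (U × R)} {V : Finset U} {u : U} :
    nbhd UR V ⊆ nbhd UR (V.erase u) ∪ nbhd UR {u} := by
  intro r hr; rw [mem_nbhd] at hr; obtain ⟨v, hv, h2⟩ := hr
  rcases eq_or_ne v u with rfl | hne
  · exact Finset.mem_union_right _ (mem_nbhd.2 ⟨v, by simp, h2⟩)
  · exact Finset.mem_union_left _ (mem_nbhd.2 ⟨v, Finset.mem_erase.2 ⟨hne, hv⟩, h2⟩)

/-- Swap lemma: if `S` is a blocker, teams `V` meet `S` only possibly at `u ∈ V i`,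
and `w ∉ S` has same (or larger) neighborhood and is free outside team `i`,
we get a contradiction. -/
lemma swap_contra {U R : Type*} [Fintype U] [DecidableEq U] [DecidableEq R]
    {UR : Finset (U × R)} {P : Finset R} {d t : ℕ} {S : Finset U}
    (hS : isBlocker UR P d t S)
    (V : Fin d → Finset U)
    (hdisj : ∀ i j, i ≠ j → Disjoint (V i) (V j))
    (hcard : ∀ i, (V i).card ≤ t)
    (hcov : ∀ i, P ⊆ nbhd UR (V i))
    {i : Fin d} {u w : U}
    (hsub : ∀ k, ∀ x ∈ V k, x ∈ S → x = u)
    (hui : u ∈ V i) (hwS : w ∉ S)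
    (hnw : nbhd UR {u} ⊆ nbhd UR {w})
    (hfree : ∀ j, j ≠ i → w ∉ V j) : False := by
  set W : Fin d → Finset U := Function.update V i (insert w ((V i).erase u)) with hW
  have hWi : W i = insert w ((V i).erase u) := Function.update_self _ _ _
  have hWj : ∀ j, j ≠ i → W j = V j := fun j hj => Function.update_of_ne hj _ _
  have hWs : ∀ k, W k ⊆ insert w (V k) := by
    intro k x hx
    rcases eq_or_ne k i with rfl | hk
    · rw [hWi] at hx
      rcases Finset.mem_insert.1 hx with rfl | hx
      · exact Finset.mem_insert_self _ _
      · exact Finset.mem_insert_of_mem (Finset.mem_of_mem_erase hx)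
    · rw [hWj k hk] at hx; exact Finset.mem_insert_of_mem hx
  have hd : ∀ a b, a ≠ b → Disjoint (W a) (W b) := by
    -- disjoint
        intro a b hab
        rcases eq_or_ne a i with rfl | ha
        · rw [hWi, hWj b (Ne.symm hab)]
          refine Finset.disjoint_left.2 fun x hx hxb => ?_
          rcases Finset.mem_insert.1 hx with rfl | hx
          · exact hfree b (Ne.symm hab) hxb
          · exact Finset.disjoint_left.1 (hdisj a b hab) (Finset.mem_of_mem_erase hx) hxb
        · rcases eq_or_ne b i with rfl | hb
          · rw [hWi, hWj a ha]
            refine Finset.disjoint_right.2 fun x hx hxa => ?_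
            rcases Finset.mem_insert.1 hx with rfl | hx
            · exact hfree a ha hxa
            · exact Finset.disjoint_left.1 (hdisj b a (Ne.symm hab)) (Finset.mem_of_mem_erase hx) hxa
          · rw [hWj a ha, hWj b hb]; exact hdisj a b hab
  have hc : ∀ k, (W k).card ≤ t := by
    -- card
        intro k
        rcases eq_or_ne k i with rfl | hk
        · rw [hWi]
          calc (insert w ((V k).erase u)).card ≤ ((V k).erase u).card + 1 :=
                Finset.card_insert_le _ _
            _ = (V k).card - 1 + 1 := by rw [Finset.card_erase_of_mem hui]
            _ ≤ (V k).card := by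
                  have h1 : 1 ≤ (V k).card := Finset.card_pos.2 ⟨u, hui⟩
                  omega
            _ ≤ t := hcard k
        · rw [hWj k hk]; exact hcard k
  have hv : ∀ k, P ⊆ nbhd UR (W k) := by
    -- cover
        intro k
        rcases eq_or_ne k i with rfl | hk
        · rw [hWi]
          intro r hr
          rcases Finset.mem_union.1 (nbhd_erase (hcov k (hr))) with h | h
          · exact nbhd_mono (Finset.subset_insert _ _) h
          · exact nbhd_mono (by intro x hx; simp at hx; subst hx; exact Finset.mem_insert_self _ _)
              (hnw h)
        · rw [hWj k hk]; exact hcov k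

  obtain ⟨x, hx⟩ := hS W hd hc hv
  rw [Finset.mem_inter, Finset.mem_biUnion] at hx
  obtain ⟨⟨k, _, hxk⟩, hxS⟩ := hx
  rcases eq_or_ne k i with rfl | hk
  · rw [hWi] at hxk
    rcases Finset.mem_insert.1 hxk with rfl | hxk
    · exact hwS hxS
    · exact (Finset.mem_erase.1 hxk).1 (hsub k _ (Finset.mem_of_mem_erase hxk) hxS)
  · rw [hWj k hk] at hxk
    have := hsub k x hxk hxS
    subst this
    exact (Finset.disjoint_left.1 (hdisj i k (Ne.symm hk))) hui hxk

/-- Claim: for a minimal blocker set `S`, for every `C ⊆ P`, if `U_C ∩ S ≠ ∅`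
then `|U_C ∖ S| < d`, where `U_C` is the set of users with neighborhood `C`. -/
theorem minimal_blocker_claim {U R : Type*} [Fintype U] [DecidableEq U] [DecidableEq R]
    (UR : Finset (U × R)) (P : Finset R) (d t : ℕ) (hd : 1 ≤ d) (ht : 1 ≤ t)
    (S : Finset U)
    (hS : isBlocker UR P d t S)
    (hmin : ∀ S' ⊂ S, ¬ isBlocker UR P d t S')
    (C : Finset R) (hC : C ⊆ P)
    (hint : ((Finset.univ.filter (fun u => nbhd UR {u} = C)) ∩ S).Nonempty) :
    ((Finset.univ.filter (fun u => nbhd UR {u} = C)) \ S).card < d := by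
  by_contra hcon
  push_neg at hcon
  set T := (Finset.univ.filter (fun u : U => nbhd UR {u} = C)) with hT
  obtain ⟨u, hu⟩ := hint
  rw [Finset.mem_inter] at hu
  obtain ⟨huT, huS⟩ := hu
  have huC : nbhd UR {u} = C := (Finset.mem_filter.1 huT).2
  have hnb := hmin (S.erase u) (Finset.erase_ssubset huS)
  rw [isBlocker] at hnb
  push_neg at hnb
  obtain ⟨V, hdisj, hcard, hcov, hns⟩ := hnb
  have hsub : ∀ k, ∀ x ∈ V k, x ∈ S → x = u := by
    intro k x hx hxS
    by_contra hne
    have : x ∈ (Finset.univ.biUnion V) ∩ (S.erase u) :=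
      Finset.mem_inter.2 ⟨Finset.mem_biUnion.2 ⟨k, Finset.mem_univ _, hx⟩,
        Finset.mem_erase.2 ⟨hne, hxS⟩⟩
    rw [hns] at this
    exact absurd this (Finset.notMem_empty x)
  by_cases hu' : ∃ i, u ∈ V i
  · obtain ⟨i, hui⟩ := hu'
    -- every w in T \ S has neighborhood C = nbhd {u}
    have hnbw : ∀ w ∈ T \ S, nbhd UR {u} ⊆ nbhd UR {w} := by
      intro w hw
      have : nbhd UR {w} = C := (Finset.mem_filter.1 (Finset.mem_sdiff.1 hw).1).2
      rw [this, huC]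
    have hwS : ∀ w ∈ T \ S, w ∉ S := fun w hw => (Finset.mem_sdiff.1 hw).2
    by_cases hA : ∃ w ∈ T \ S, ∀ j, j ≠ i → w ∉ V j
    · obtain ⟨w, hw, hfree⟩ := hA
      exact swap_contra hS V hdisj hcard hcov hsub hui (hwS w hw) (hnbw w hw) hfree
    · push_neg at hA
      -- every w ∈ T \ S lies in some V j with j ≠ i; pigeonhole
      have hmap : ∀ w ∈ T \ S, ∃ j, j ≠ i ∧ w ∈ V j := by
        intro w hw; obtain ⟨j, hj1, hj2⟩ := hA w hw; exact ⟨j, hj1, hj2⟩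
      classical
      set f : U → Fin d := fun w =>
        if h : ∃ j, j ≠ i ∧ w ∈ V j then h.choose else i with hf
      have hfspec : ∀ w ∈ T \ S, f w ≠ i ∧ w ∈ V (f w) := by
        intro w hw
        have h := hmap w hw
        simp only [hf, dif_pos h]
        exact h.choose_spec
      have hpig : ∃ w1 ∈ T \ S, ∃ w2 ∈ T \ S, w1 ≠ w2 ∧ f w1 = f w2 := by
        apply Finset.exists_ne_map_eq_of_card_lt_of_maps_to
        · have : (Finset.univ.erase i).card = d - 1 := by
            rw [Finset.card_erase_of_mem (Finset.mem_univ _), Finset.card_univ,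
              Fintype.card_fin]
          rw [this]; omega
        · intro w hw
          exact Finset.mem_erase.2 ⟨(hfspec w hw).1, Finset.mem_univ _⟩
      obtain ⟨w1, hw1, w2, hw2, hne, hfeq⟩ := hpig
      set j := f w1 with hj
      have hji : j ≠ i := (hfspec w1 hw1).1
      have hw1j : w1 ∈ V j := (hfspec w1 hw1).2
      have hw2j : w2 ∈ V j := hfeq ▸ (hfspec w2 hw2).2
      -- new family: remove w1 from V j
      set V' : Fin d → Finset U := Function.update V j ((V j).erase w1) with hV'
      have hV'j : V' j = (V j).erase w1 := Function.update_self _ _ _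
      have hV'k : ∀ k, k ≠ j → V' k = V k := fun k hk => Function.update_of_ne hk _ _
      have hV's : ∀ k, V' k ⊆ V k := by
        intro k
        rcases eq_or_ne k j with rfl | hk
        · rw [hV'j]; exact Finset.erase_subset _ _
        · rw [hV'k k hk]
      have hcov' : ∀ k, P ⊆ nbhd UR (V' k) := by
        intro k
        rcases eq_or_ne k j with hkj | hk
        · rw [hkj, hV'j]
          intro r hr
          rcases Finset.mem_union.1 (nbhd_erase (hcov j hr)) with h | h
          · exact h
          · have e1 : nbhd UR {w1} = C :=
              (Finset.mem_filter.1 (Finset.mem_sdiff.1 hw1).1).2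
            have e2 : nbhd UR {w2} = C :=
              (Finset.mem_filter.1 (Finset.mem_sdiff.1 hw2).1).2
            have hmm : nbhd UR {w2} ⊆ nbhd UR ((V j).erase w1) :=
              nbhd_mono (by
                intro x hx
                simp only [Finset.mem_singleton] at hx
                subst hx
                exact Finset.mem_erase.2 ⟨Ne.symm hne, hw2j⟩)
            exact hmm (by rw [e2, ← e1]; exact h)
        · rw [hV'k k hk]; exact hcov k
      have hui' : u ∈ V' i := by rw [hV'k i (Ne.symm hji)]; exact hui
      have hfree' : ∀ k, k ≠ i → w1 ∉ V' k := by
        intro k hk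
        rcases eq_or_ne k j with hkj | hkj
        · rw [hkj, hV'j]; exact Finset.notMem_erase _ _
        · rw [hV'k k hkj]
          exact Finset.disjoint_left.1 (hdisj j k (Ne.symm hkj)) hw1j
      exact swap_contra hS V' (fun a b hab => Finset.disjoint_of_subset_left (hV's a)
        (Finset.disjoint_of_subset_right (hV's b) (hdisj a b hab)))
        (fun k => le_trans (Finset.card_le_card (hV's k)) (hcard k)) hcov'
        (fun k x hx hxS => hsub k x (hV's k hx) hxS)
        hui' (hwS w1 hw1) (hnbw w1 hw1) hfree'
  · -- u not in any team: teams avoid S entirely, contradicting hS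
    obtain ⟨x, hx⟩ := hS V hdisj hcard hcov
    rw [Finset.mem_inter, Finset.mem_biUnion] at hx
    obtain ⟨⟨k, _, hxk⟩, hxS⟩ := hx
    have := hsub k x hxk hxS
    subst this
    exact hu' ⟨k, hxk⟩
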